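/- A simply connected compact complex manifold does not admit any branched flat holomorphic affine structure. -/

import Mathlib

open scoped Manifold
open Function Set

noncomputable section

section ProjectiveTargets

variable {EM : Type*} [NormedAddCommGroup EM] [NormedSpace ℂ EM]
  {M : Type*} [TopologicalSpace M] [ChartedSpace EM M]

/-- The complex projective space `ℂP^N`, as the projectivization of `ℂ^{N+1}`. -/
abbrev ProjSpace (N : ℕ) := Projectivization ℂ (Fin (N + 1) → ℂ)

/-- The rank at `x` of (the differential of) the map to projective space determined by the
nowhere vanishing holomorphic lift `F : M → ℂ^{N+1} \ {0}`: the dimension of the span of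
`F x` together with the image of the differential of `F` at `x`. -/
def projLiftRankAt {N : ℕ} (F : M → (Fin (N + 1) → ℂ)) (x : M) : ℕ :=
  Module.finrank ℂ
    ↥(Submodule.span ℂ
      (insert (F x) (Set.range (mfderiv 𝓘(ℂ, EM) 𝓘(ℂ, Fin (N + 1) → ℂ) F x))))

/-- A map from a complex manifold to projective space is holomorphic on `U` if around
every point of `U` it admits a nowhere vanishing holomorphic lift to `ℂ^{N+1}`. -/
def HolomorphicToProj {N : ℕ} (f : M → ProjSpace N) (U : Set M) : Prop :=
  ∀ x ∈ U, ∃ V : Set M, IsOpen V ∧ x ∈ V ∧ V ⊆ U ∧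
    ∃ F : M → (Fin (N + 1) → ℂ),
      MDifferentiableOn 𝓘(ℂ, EM) 𝓘(ℂ, Fin (N + 1) → ℂ) F V ∧
      ∀ y ∈ V, ∃ hy : F y ≠ 0, f y = Projectivization.mk ℂ (F y) hy

/-- A complex manifold of dimension `m` is projective if it admits a holomorphic injective
immersion (hence, being compact, an embedding) into some complex projective space. -/
def IsProjectiveCplxManifold (m : ℕ) (M : Type*) [TopologicalSpace M]
    [ChartedSpace EM M] : Prop :=
  ∃ (N : ℕ) (f : M → ProjSpace N), Function.Injective f ∧
    ∀ x : M, ∃ V : Set M, IsOpen V ∧ x ∈ V ∧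
      ∃ F : M → (Fin (N + 1) → ℂ),
        MDifferentiableOn 𝓘(ℂ, EM) 𝓘(ℂ, Fin (N + 1) → ℂ) F V ∧
        (∀ y ∈ V, ∃ hy : F y ≠ 0, f y = Projectivization.mk ℂ (F y) hy) ∧
        projLiftRankAt (EM := EM) F x = m + 1

end ProjectiveTargets

section BranchedAtlases

variable {M : Type*} {m : ℕ} [TopologicalSpace M] [ChartedSpace (Fin m → ℂ) M]

/-- The chart `φ` (with values in `ℂP^m`) is unbranched at `y`: some local nowhere
vanishing holomorphic lift of `φ` has maximal rank `m + 1` at `y`, i.e. `φ` is a local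
biholomorphism at `y`. -/
def ProjChartUnbranchedAt (φ : M → ProjSpace m) (U : Set M) (y : M) : Prop :=
  ∃ V : Set M, IsOpen V ∧ y ∈ V ∧ V ⊆ U ∧
    ∃ F : M → (Fin (m + 1) → ℂ),
      MDifferentiableOn 𝓘(ℂ, Fin m → ℂ) 𝓘(ℂ, Fin (m + 1) → ℂ) F V ∧
      (∀ z ∈ V, ∃ hz : F z ≠ 0, φ z = Projectivization.mk ℂ (F z) hz) ∧
      projLiftRankAt (EM := Fin m → ℂ) F y = m + 1

/-- A branched flat holomorphic projective structure on the `m`-dimensional complex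
manifold `M`, presented by its developing atlas: an open cover `(Uᵢ)` with holomorphic
charts `φᵢ : Uᵢ → ℂP^m` which are local biholomorphisms on a dense subset of `Uᵢ`, whose
transition maps are restrictions of elements of `PGL(m+1, ℂ)` (projectivized linear
automorphisms of `ℂ^{m+1}`) on each connected component of the overlaps. -/
def HasBranchedFlatProjectiveStructure (m : ℕ) (M : Type*) [TopologicalSpace M]
    [ChartedSpace (Fin m → ℂ) M] : Prop :=
  ∃ (ι : Type) (U : ι → Set M) (φ : ι → M → ProjSpace m),
    (∀ i, IsOpen (U i)) ∧ (⋃ i, U i) = univ ∧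
    (∀ i, HolomorphicToProj (EM := Fin m → ℂ) (φ i) (U i)) ∧
    (∀ i, ∀ x ∈ U i, x ∈ closure {y ∈ U i | ProjChartUnbranchedAt (φ i) (U i) y}) ∧
    (∀ i j, ∀ x ∈ U i ∩ U j,
      ∃ A : (Fin (m + 1) → ℂ) ≃ₗ[ℂ] (Fin (m + 1) → ℂ),
        ∀ y ∈ connectedComponentIn (U i ∩ U j) x,
          φ i y = Projectivization.map A.toLinearMap A.injective (φ j y))

/-- A branched flat holomorphic affine structure on the `m`-dimensional complex manifold
`M`, presented by its developing atlas: an open cover `(Uᵢ)` with holomorphic charts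
`φᵢ : Uᵢ → ℂ^m` which are local biholomorphisms on a dense subset of `Uᵢ`, whose
transition maps are restrictions of complex affine transformations of `ℂ^m` on each
connected component of the overlaps. -/
def HasBranchedFlatAffineStructure (m : ℕ) (M : Type*) [TopologicalSpace M]
    [ChartedSpace (Fin m → ℂ) M] : Prop :=
  ∃ (ι : Type) (U : ι → Set M) (φ : ι → M → (Fin m → ℂ)),
    (∀ i, IsOpen (U i)) ∧ (⋃ i, U i) = univ ∧
    (∀ i, MDifferentiableOn 𝓘(ℂ, Fin m → ℂ) 𝓘(ℂ, Fin m → ℂ) (φ i) (U i)) ∧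
    (∀ i, ∀ x ∈ U i, x ∈ closure {y ∈ U i |
      Function.Bijective (mfderiv 𝓘(ℂ, Fin m → ℂ) 𝓘(ℂ, Fin m → ℂ) (φ i) y)}) ∧
    (∀ i j, ∀ x ∈ U i ∩ U j,
      ∃ (A : (Fin m → ℂ) ≃ₗ[ℂ] (Fin m → ℂ)) (b : Fin m → ℂ),
        ∀ y ∈ connectedComponentIn (U i ∩ U j) x, φ i y = A (φ j y) + b)

end BranchedAtlases


section DevelopingTheory
open Filter Topology

section AbstractContinuation
variable {X : Type*} [TopologicalSpace X] {α : Type*}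
structure SheetSystem (X : Type*) [TopologicalSpace X] (α : Type*) where
  Sheet : Set X → (X → α) → Prop
  isOpen' : ∀ {V h}, Sheet V h → IsOpen V
  cover : ∀ x : X, ∃ V h, Sheet V h ∧ x ∈ V
  rigid : ∀ {V h V' h' x}, Sheet V h → Sheet V' h' → x ∈ V → x ∈ V' →
    h =ᶠ[nhds x] h' → Set.EqOn h h' (connectedComponentIn (V ∩ V') x)
  move : ∀ {V h V' h'} (y : X), Sheet V h → Sheet V' h' → y ∈ V → y ∈ V' →
    ∃ h'', Sheet V h'' ∧ h'' =ᶠ[nhds y] h'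
namespace SheetSystem
variable [LocallyConnectedSpace X] (S : SheetSystem X α)
theorem eventually_eventuallyEq {V h V' h' : _} {x : X}
    (hV : S.Sheet V h) (hV' : S.Sheet V' h') (hx : x ∈ V) (hx' : x ∈ V')
    (he : h =ᶠ[nhds x] h') : ∀ᶠ y in nhds x, h =ᶠ[nhds y] h' := by
  have hDo : IsOpen (connectedComponentIn (V ∩ V') x) :=
    ((S.isOpen' hV).inter (S.isOpen' hV')).connectedComponentIn
  have hxD : x ∈ connectedComponentIn (V ∩ V') x := mem_connectedComponentIn ⟨hx, hx'⟩
  have hEq := S.rigid hV hV' hx hx' he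
  filter_upwards [hDo.eventually_mem hxD] with y hy
  exact eventuallyEq_of_mem (hDo.mem_nhds hy) fun z hz => hEq hz
def Fits (c : ℝ → X) (L : ℝ → X → α) (t : ℝ) : Prop :=
  ∃ V h, S.Sheet V h ∧ ∀ᶠ u in nhds t, c u ∈ V ∧ L u =ᶠ[nhds (c u)] h
def IsLift (c : ℝ → X) (L : ℝ → X → α) : Prop := ∀ t, S.Fits c L t

/-- Uniqueness of continuation: two lifts of the same curve with the same initial germ
have the same germ at every time. -/
theorem IsLift.germ_eq {c : ℝ → X} (hc : Continuous c) {L L' : ℝ → X → α}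
    (hL : S.IsLift c L) (hL' : S.IsLift c L') (h0 : L 0 =ᶠ[nhds (c 0)] L' 0) (t : ℝ) :
    L t =ᶠ[nhds (c t)] L' t := by
  set Z := {t : ℝ | L t =ᶠ[nhds (c t)] L' t} with hZ
  have hop : IsOpen Z := by
    rw [isOpen_iff_mem_nhds]
    intro t ht
    obtain ⟨V, h, hSh, hE⟩ := hL t
    obtain ⟨V', h', hSh', hE'⟩ := hL' t
    obtain ⟨hcV, hLh⟩ := hE.self_of_nhds
    obtain ⟨hcV', hLh'⟩ := hE'.self_of_nhds
    have hhh' : h =ᶠ[nhds (c t)] h' := (hLh.symm.trans ht).trans hLh'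
    have hDo : IsOpen (connectedComponentIn (V ∩ V') (c t)) :=
      ((S.isOpen' hSh).inter (S.isOpen' hSh')).connectedComponentIn
    have hxD : c t ∈ connectedComponentIn (V ∩ V') (c t) :=
      mem_connectedComponentIn ⟨hcV, hcV'⟩
    have hEq := S.rigid hSh hSh' hcV hcV' hhh'
    filter_upwards [hE, hE', hc.continuousAt.preimage_mem_nhds (hDo.mem_nhds hxD)]
      with u hu hu' huD
    exact hu.2.trans ((eventuallyEq_of_mem (hDo.mem_nhds huD) fun z hz => hEq hz).trans
      hu'.2.symm)
  have hcl : IsClosed Z := by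
    rw [← closure_subset_iff_isClosed]
    intro t ht
    obtain ⟨V, h, hSh, hE⟩ := hL t
    obtain ⟨V', h', hSh', hE'⟩ := hL' t
    obtain ⟨hcV, hLh⟩ := hE.self_of_nhds
    obtain ⟨hcV', hLh'⟩ := hE'.self_of_nhds
    have hDo : IsOpen (connectedComponentIn (V ∩ V') (c t)) :=
      ((S.isOpen' hSh).inter (S.isOpen' hSh')).connectedComponentIn
    have hxD : c t ∈ connectedComponentIn (V ∩ V') (c t) :=
      mem_connectedComponentIn ⟨hcV, hcV'⟩
    obtain ⟨u, huZ, ⟨huV, huL⟩, ⟨huV', huL'⟩, huD⟩ :=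
      (mem_closure_iff_frequently.1 ht).and_eventually
        (hE.and (hE'.and (hc.continuousAt.preimage_mem_nhds (hDo.mem_nhds hxD)))) |>.exists
    have hhh' : h =ᶠ[nhds (c u)] h' := (huL.symm.trans huZ).trans huL'
    have hEq := S.rigid hSh hSh' huV huV' hhh'
    rw [← connectedComponentIn_eq huD] at hEq
    have : h =ᶠ[nhds (c t)] h' :=
      eventuallyEq_of_mem (hDo.mem_nhds hxD) fun z hz => hEq hz
    exact hLh.trans (this.trans hLh'.symm)
  have : Z = univ := IsClopen.eq_univ ⟨hcl, hop⟩ ⟨0, h0⟩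
  exact (this ▸ mem_univ t : t ∈ Z)


/-- Existence of continuations along curves (with a clamped parametrization). -/
theorem exists_lift {c : ℝ → X} (hc : Continuous c)
    (hcl : ∀ t, c (max 0 (min 1 t)) = c t)
    {V₀ : Set X} {h₀ : X → α} (hS₀ : S.Sheet V₀ h₀) (hc0 : c 0 ∈ V₀) :
    ∃ L, S.IsLift c L ∧ L 0 = h₀ := by
  have hneg : ∀ u : ℝ, u ≤ 0 → c u = c 0 := by
    intro u hu
    have h1 : max 0 (min 1 u) = 0 := by
      rw [min_eq_right (hu.trans zero_le_one), max_eq_left hu]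
    calc c u = c (max 0 (min 1 u)) := (hcl u).symm
    _ = c 0 := by rw [h1]
  have hone : ∀ u : ℝ, 1 ≤ u → c u = c 1 := by
    intro u hu
    have h1 : max 0 (min 1 u) = 1 := by
      simp [min_eq_left hu]
    calc c u = c (max 0 (min 1 u)) := (hcl u).symm
    _ = c 1 := by rw [h1]
  -- the partial-lift predicate
  set P : ℝ → Prop := fun b => ∃ L : ℝ → X → α,
      (∀ u : ℝ, u ≤ 0 → L u = h₀) ∧ ∀ s ≤ b, S.Fits c L s with hP
  have hmono : ∀ {a b : ℝ}, a ≤ b → P b → P a := by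
    rintro a b hab ⟨L, hL0, hL⟩
    exact ⟨L, hL0, fun s hs => hL s (hs.trans hab)⟩
  have hbase : ∀ b : ℝ, b ≤ 0 → P b := by
    intro b hb
    refine ⟨fun _ => h₀, fun _ _ => rfl, fun s hs => ?_⟩
    refine ⟨V₀, h₀, hS₀, ?_⟩
    have hcs : c s ∈ V₀ := by rw [hneg s (hs.trans hb)]; exact hc0
    filter_upwards [hc.continuousAt.preimage_mem_nhds ((S.isOpen' hS₀).mem_nhds hcs)]
      with u hu
    exact ⟨hu, EventuallyEq.rfl⟩
  have hbase0 : P 0 := by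
    refine ⟨fun _ => h₀, fun _ _ => rfl, fun s hs => ?_⟩
    refine ⟨V₀, h₀, hS₀, ?_⟩
    have hcs : c s ∈ V₀ := by rw [hneg s hs]; exact hc0
    filter_upwards [hc.continuousAt.preimage_mem_nhds ((S.isOpen' hS₀).mem_nhds hcs)]
      with u hu
    exact ⟨hu, EventuallyEq.rfl⟩
  -- all of ℝ satisfies P
  have hall : ∀ b : ℝ, P b := by
    by_contra hcon
    push_neg at hcon
    obtain ⟨b₀, hb₀⟩ := hcon
    set B := {b : ℝ | ¬ P b} with hB
    have hBne : B.Nonempty := ⟨b₀, hb₀⟩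
    have hBbd : BddBelow B := ⟨0, fun b hb => by
      by_contra hb'
      exact hb (hbase b (le_of_not_ge hb'))⟩
    set τ := sInf B with hτ
    have hτ0 : 0 ≤ τ := le_csInf hBne (fun b hb => by
      by_contra hb'
      exact hb (hbase b (le_of_not_ge hb')))
    have hbelow : ∀ s, s < τ → P s := by
      intro s hs
      by_contra h
      exact absurd (csInf_le hBbd h) (not_le.2 hs)
    -- a sheet near `c τ`
    obtain ⟨Vs, hs, hSs, hmem⟩ := S.cover (c τ)
    obtain ⟨δ, hδ, hball⟩ := Metric.mem_nhds_iff.1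
      (hc.continuousAt.preimage_mem_nhds ((S.isOpen' hSs).mem_nhds hmem))
    set t := max 0 (τ - δ / 2) with ht
    have htτ : t ≤ τ := max_le hτ0 (by linarith)
    have htd : dist t τ < δ := by
      rw [Real.dist_eq, abs_lt]
      constructor
      · have : τ - δ/2 ≤ t := le_max_right _ _
        linarith
      · linarith [le_max_left (0:ℝ) (τ - δ/2), hτ0, htτ]
    have hPt : P t := by
      rcases lt_or_eq_of_le htτ with h | h
      · exact hbelow t h
      · have hτz : τ = 0 := by
          by_contra hne
          have hτpos : 0 < τ := lt_of_le_of_ne hτ0 (Ne.symm hne)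
          have : t < τ := max_lt hτpos (by linarith)
          exact absurd h this.ne
        have htz : t = 0 := by
          rw [ht, hτz]
          exact max_eq_left (by linarith)
        rw [htz]; exact hbase0
    obtain ⟨L, hL0, hLfits⟩ := hPt
    obtain ⟨V', h', hS', hE'⟩ := hLfits t le_rfl
    have hcV' : c t ∈ V' := (hE'.self_of_nhds).1
    have hcVs : c t ∈ Vs := hball htd
    obtain ⟨h'', hS'', hmatch⟩ := S.move (c t) hSs hS' hcVs hcV'
    set L' : ℝ → X → α := fun u => if u ≤ t then L u else h'' with hL'def
    have hL'0 : ∀ u : ℝ, u ≤ 0 → L' u = h₀ := by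
      intro u hu
      have hut : u ≤ t := hu.trans (le_max_left _ _)
      simp only [hL'def, if_pos hut]
      exact hL0 u hu
    -- membership of nearby points in the δ-ball around τ
    have hballmem : ∀ s : ℝ, t ≤ s → s ≤ τ + δ/2 → Metric.ball τ δ ∈ nhds s := by
      intro s h1 h2
      refine Metric.isOpen_ball.mem_nhds ?_
      rw [Metric.mem_ball, Real.dist_eq, abs_lt]
      have h3 : τ - δ/2 ≤ t := le_max_right _ _
      constructor <;> linarith
    have hstep : P (τ + δ / 2) := by
      refine ⟨L', hL'0, fun s hsle => ?_⟩
      rcases lt_trichotomy s t with hst | hst | hst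
      · obtain ⟨V₁, h₁, hS₁, hE₁⟩ := hLfits s hst.le
        refine ⟨V₁, h₁, hS₁, ?_⟩
        filter_upwards [hE₁, eventually_lt_nhds hst] with u hu hu2
        simpa only [hL'def, if_pos hu2.le] using hu
      · -- s = t
        rw [hst]
        refine ⟨Vs, h'', hS'', ?_⟩
        have hprop : ∀ᶠ z in nhds (c t), h'' =ᶠ[nhds z] h' :=
          S.eventually_eventuallyEq hS'' hS' hcVs hcV' hmatch
        filter_upwards [hE', hc.continuousAt.eventually hprop,
          hc.continuousAt.preimage_mem_nhds ((S.isOpen' hSs).mem_nhds hcVs)]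
          with u hu huW huV
        refine ⟨huV, ?_⟩
        by_cases hut : u ≤ t
        · simp only [hL'def, if_pos hut]
          exact hu.2.trans huW.symm
        · simp only [hL'def, if_neg hut]
          exact EventuallyEq.rfl
      · refine ⟨Vs, h'', hS'', ?_⟩
        filter_upwards [eventually_gt_nhds hst, hballmem s hst.le hsle] with u hu huB
        refine ⟨hball huB, ?_⟩
        simp only [hL'def, if_neg (not_le.2 hu)]
        exact EventuallyEq.rfl
    have hlt : τ + δ/2 ≤ τ := by
      refine le_csInf hBne (fun b hb => ?_)
      by_contra hb'
      exact hb (hmono (le_of_not_ge hb') hstep)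
    linarith
  -- extract the lift from `P 2`
  obtain ⟨L, hL0, hLfits⟩ := hall 2
  refine ⟨fun u => L (min u 2), ?_, by simpa using hL0 0 le_rfl⟩
  intro s
  rcases lt_trichotomy s 2 with hs | hs | hs
  · obtain ⟨V₁, h₁, hS₁, hE₁⟩ := hLfits s hs.le
    refine ⟨V₁, h₁, hS₁, ?_⟩
    filter_upwards [hE₁, eventually_lt_nhds hs] with u hu hu2
    rw [min_eq_left hu2.le]
    exact hu
  · subst hs
    obtain ⟨V₂, h₂, hS₂, hE₂⟩ := hLfits 2 le_rfl
    have h2pt : c 2 ∈ V₂ ∧ L 2 =ᶠ[nhds (c 2)] h₂ := hE₂.self_of_nhds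
    refine ⟨V₂, h₂, hS₂, ?_⟩
    filter_upwards [hE₂, eventually_gt_nhds (by norm_num : (1:ℝ) < 2)] with u hu hu1
    rcases le_total u 2 with hu2 | hu2
    · rw [min_eq_left hu2]
      exact hu
    · rw [min_eq_right hu2]
      have hcu : c u = c 2 := by rw [hone u (by linarith), hone 2 (by norm_num)]
      rw [hcu]
      exact ⟨h2pt.1, h2pt.2⟩
  · obtain ⟨V₂, h₂, hS₂, hE₂⟩ := hLfits 2 le_rfl
    have h2pt : c 2 ∈ V₂ ∧ L 2 =ᶠ[nhds (c 2)] h₂ := hE₂.self_of_nhds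
    refine ⟨V₂, h₂, hS₂, ?_⟩
    filter_upwards [eventually_gt_nhds hs] with u hu
    have hu2 : (2:ℝ) ≤ u := by linarith
    rw [min_eq_right hu2]
    have hcu : c u = c 2 := by rw [hone u (by linarith), hone 2 (by norm_num)]
    rw [hcu]
    exact ⟨h2pt.1, h2pt.2⟩

/-- Clamp-normalization of a lift of a clamped curve. -/
theorem IsLift.clampLift {c : ℝ → X} {L : ℝ → X → α} (hcl : ∀ t, c (max 0 (min 1 t)) = c t)
    (hL : S.IsLift c L) : S.IsLift c (fun u => L (max 0 (min 1 u))) := by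
  intro t
  obtain ⟨V, h, hS, hE⟩ := hL (max 0 (min 1 t))
  refine ⟨V, h, hS, ?_⟩
  have hσ : Continuous fun u : ℝ => max 0 (min 1 u) :=
    continuous_const.max (continuous_const.min continuous_id)
  filter_upwards [hσ.continuousAt.preimage_mem_nhds hE] with u hu
  rw [← hcl u]
  exact hu

/-- Lifts can be transported to nearby curves in a family with fixed endpoints. -/
theorem transport {H : ℝ × ℝ → X} (hH : Continuous H)
    (hHcl : ∀ s t, H (s, max 0 (min 1 t)) = H (s, t))
    (s₀ : ℝ) {L : ℝ → X → α} (hL : S.IsLift (fun t => H (s₀, t)) L) :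
    ∀ᶠ s in nhds s₀, ∃ L', S.IsLift (fun t => H (s, t)) L' ∧
      L' 0 =ᶠ[nhds (H (s₀, 0))] L 0 ∧ L' 1 =ᶠ[nhds (H (s₀, 1))] L 1 := by
  classical
  set cl : ℝ → ℝ := fun u => max 0 (min 1 u) with hcldef
  have hclc : Continuous cl := continuous_const.max (continuous_const.min continuous_id)
  have hclIcc : ∀ u, cl u ∈ Icc (0:ℝ) 1 := fun u =>
    ⟨le_max_left _ _, max_le (by norm_num) (min_le_left _ _)⟩
  have hcl0 : cl 0 = 0 := by simp [hcldef]
  have hcl1 : cl 1 = 1 := by simp [hcldef]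
  set c : ℝ → X := fun t => H (s₀, t) with hcdef
  set Ln : ℝ → X → α := fun u => L (cl u) with hLndef
  have hLn : S.IsLift c Ln := hL.clampLift (S := S) (fun t => hHcl s₀ t)
  -- choose sheet data at each time
  have key : ∀ v : ℝ, ∃ (V : Set X) (h : X → α) (N : Set ℝ), S.Sheet V h ∧ IsOpen N ∧
      (v ∈ Icc (0:ℝ) 1 → v ∈ N) ∧ N ⊆ Ioo (-1 : ℝ) 2 ∧
      ∀ u ∈ N, c u ∈ V ∧ Ln u =ᶠ[nhds (c u)] h := by
    intro v
    obtain ⟨V, h, hS, hE⟩ := hLn v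
    obtain ⟨N₁, hN₁sub, hN₁o, hvN₁⟩ := mem_nhds_iff.1 hE
    refine ⟨V, h, N₁ ∩ Ioo (-1) 2, hS, hN₁o.inter isOpen_Ioo,
      fun hv => ⟨hvN₁, by constructor <;> [linarith [hv.1]; linarith [hv.2]]⟩,
      inter_subset_right, fun u hu => hN₁sub hu.1⟩
  choose Vv hfun Nv hSv hNo hNmem hNsub hNprop using key
  -- finite subcover of [0,1]
  obtain ⟨F, hF⟩ := isCompact_Icc.elim_finite_subcover Nv (fun v => hNo v)
      (fun v hv' => mem_iUnion.2 ⟨v, hNmem v hv'⟩)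
  -- shrink the cover
  obtain ⟨W, hWcov, hWo, hWsub⟩ := exists_subset_iUnion_closure_subset isClosed_Icc
      (u := fun i : F => Nv i) (fun i => hNo i) (fun x _ => Set.toFinite _)
      (by intro x hx
          rcases mem_iUnion₂.1 (hF hx) with ⟨i, hiF, hxi⟩
          exact mem_iUnion.2 ⟨⟨i, hiF⟩, hxi⟩)
  set K : F → Set ℝ := fun i => closure (W i) with hKdef
  have hWK : ∀ i : F, W i ⊆ K i := fun i => subset_closure
  have hKN : ∀ i : F, K i ⊆ Nv i := fun i => hWsub i
  have hKcomp : ∀ i : F, IsCompact (K i) :=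
    fun i => isCompact_Icc.of_isClosed_subset isClosed_closure
      ((hKN i).trans ((hNsub _).trans Ioo_subset_Icc_self))
  -- tube lemma around s₀
  have hseg1 : ∀ i : F, ∀ᶠ s in nhds s₀, ∀ σ ∈ uIcc s₀ s, ∀ u ∈ K i, H (σ, u) ∈ Vv i := by
    intro i
    obtain ⟨P, Q, hPo, hQo, hsP, hKQ, hPQ⟩ := generalized_tube_lemma isCompact_singleton
      (hKcomp i) ((S.isOpen' (hSv i)).preimage hH)
      (by rintro ⟨σ, u⟩ ⟨hσ, hu⟩
          rcases hσ with rfl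
          exact (hNprop _ u (hKN i hu)).1)
    obtain ⟨ε, hε, hball⟩ := Metric.mem_nhds_iff.1 (hPo.mem_nhds (hsP rfl))
    filter_upwards [Metric.ball_mem_nhds s₀ hε] with s hsb σ hσ u hu
    have hσb : σ ∈ Metric.ball s₀ ε :=
      (convex_ball s₀ ε).ordConnected.uIcc_subset (Metric.mem_ball_self hε) hsb hσ
    exact hPQ (Set.mk_mem_prod (hball hσb) (hKQ hu))
  have hseg : ∀ᶠ s in nhds s₀, ∀ i : F, ∀ σ ∈ uIcc s₀ s, ∀ u ∈ K i, H (σ, u) ∈ Vv i :=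
    eventually_all.2 hseg1
  filter_upwards [hseg] with s hs
  -- index choice
  have hidx : ∀ w : ℝ, w ∈ Icc (0:ℝ) 1 → ∃ i : F, w ∈ W i :=
    fun w hw => mem_iUnion.1 (hWcov hw)
  set idx : ℝ → F := fun u => (hidx (cl u) (hclIcc u)).choose with hidxdef
  have hidxW : ∀ u, cl u ∈ W (idx u) := fun u => (hidx (cl u) (hclIcc u)).choose_spec
  set L' : ℝ → X → α := fun u => hfun (idx u) with hL'def
  -- pairwise compatibility at the new parameter s
  have hpair : ∀ (j k : F) (w : ℝ), w ∈ K j → w ∈ K k →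
      hfun ↑j =ᶠ[nhds (H (s, w))] hfun ↑k := by
    intro j k w hwj hwk
    obtain ⟨haVj, haLj⟩ := hNprop _ w (hKN j hwj)
    obtain ⟨haVk, haLk⟩ := hNprop _ w (hKN k hwk)
    have hjk : hfun ↑j =ᶠ[nhds (c w)] hfun ↑k := (haLj.symm).trans haLk
    have hEq := S.rigid (hSv j) (hSv k) haVj haVk hjk
    have hDo : IsOpen (connectedComponentIn (Vv ↑j ∩ Vv ↑k) (c w)) :=
      ((S.isOpen' (hSv j)).inter (S.isOpen' (hSv k))).connectedComponentIn
    have hSigpre : IsPreconnected ((fun σ => H (σ, w)) '' uIcc s₀ s) :=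
      isPreconnected_uIcc.image _ (hH.comp (continuous_id.prodMk continuous_const)).continuousOn
    have hSigsub : (fun σ => H (σ, w)) '' uIcc s₀ s ⊆ Vv ↑j ∩ Vv ↑k := by
      rintro _ ⟨σ, hσ, rfl⟩
      exact ⟨hs j σ hσ w hwj, hs k σ hσ w hwk⟩
    have hcwSig : c w ∈ (fun σ => H (σ, w)) '' uIcc s₀ s := ⟨s₀, left_mem_uIcc, rfl⟩
    have hSigD := hSigpre.subset_connectedComponentIn hcwSig hSigsub
    have hmem : H (s, w) ∈ connectedComponentIn (Vv ↑j ∩ Vv ↑k) (c w) :=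
      hSigD ⟨s, right_mem_uIcc, rfl⟩
    exact eventuallyEq_of_mem (hDo.mem_nhds hmem) fun z hz => hEq hz
  refine ⟨L', ?_, ?_, ?_⟩
  · intro t
    refine ⟨Vv (idx t), hfun (idx t), hSv (idx t), ?_⟩
    have hO : IsOpen (cl ⁻¹' (W (idx t))) := (hWo (idx t)).preimage hclc
    filter_upwards [hO.mem_nhds (by exact hidxW t)] with u (hu : cl u ∈ W (idx t))
    have h1 : H (s, u) = H (s, cl u) := (hHcl s u).symm
    constructor
    · rw [h1]
      exact hs (idx t) s right_mem_uIcc (cl u) (hWK _ hu)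
    · have h2 := hpair (idx u) (idx t) (cl u) (hWK _ (hidxW u)) (hWK _ hu)
      rw [h1]
      exact h2
  · have h00 : (0:ℝ) ∈ W (idx 0) := by have h := hidxW 0; rwa [hcl0] at h
    have h0 := hNprop _ 0 (hKN (idx 0) (hWK _ h00))
    have : Ln 0 = L 0 := by simp [hLndef, hcl0]
    exact (this ▸ h0.2).symm
  · have h11 : (1:ℝ) ∈ W (idx 1) := by have h := hidxW 1; rwa [hcl1] at h
    have h1m := hNprop _ 1 (hKN (idx 1) (hWK _ h11))
    have hLn1 : Ln 1 = L 1 := by simp [hLndef, hcl1]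
    have hc1 : c 1 = H (s₀, 1) := rfl
    exact (hc1 ▸ (hLn1 ▸ h1m.2)).symm


/-- Monodromy: within a fixed-endpoint family of curves, the final germ of the lift
with a given initial germ does not depend on the curve. -/
theorem monodromy {H : ℝ × ℝ → X} (hH : Continuous H)
    (hHcl : ∀ s t, H (s, max 0 (min 1 t)) = H (s, t))
    (hfix0 : ∀ s, H (s, 0) = H (0, 0)) (hfix1 : ∀ s, H (s, 1) = H (0, 1))
    {V₀ : Set X} {h₀ : X → α} (hS₀ : S.Sheet V₀ h₀) (h00 : H (0, 0) ∈ V₀)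
    {L₀ : ℝ → X → α} (hL₀ : S.IsLift (fun t => H (0, t)) L₀)
    (hL₀0 : L₀ 0 =ᶠ[nhds (H (0, 0))] h₀)
    {L₁ : ℝ → X → α} (hL₁ : S.IsLift (fun t => H (1, t)) L₁)
    (hL₁0 : L₁ 0 =ᶠ[nhds (H (0, 0))] h₀) :
    L₁ 1 =ᶠ[nhds (H (0, 1))] L₀ 1 := by
  have hccur : ∀ s : ℝ, Continuous fun t => H (s, t) :=
    fun s => hH.comp (continuous_const.prodMk continuous_id)
  set Z := {s : ℝ | ∀ L : ℝ → X → α, S.IsLift (fun t => H (s, t)) L →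
      L 0 =ᶠ[nhds (H (0, 0))] h₀ → L 1 =ᶠ[nhds (H (0, 1))] L₀ 1} with hZdef
  -- a chosen lift along the curve at parameter `s`
  have hlift : ∀ s : ℝ, ∃ L, S.IsLift (fun t => H (s, t)) L ∧ L 0 = h₀ := by
    intro s
    exact S.exists_lift (hccur s) (fun t => hHcl s t) hS₀ (by rw [hfix0 s]; exact h00)
  -- openness-style step
  have hopen : ∀ s, s ∈ Z → ∀ᶠ s' in nhds s, s' ∈ Z := by
    intro s hsZ
    obtain ⟨Ls, hLslift, hLs0⟩ := hlift s
    have hLs0' : Ls 0 =ᶠ[nhds (H (0, 0))] h₀ := by rw [hLs0]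
    have hLs1 : Ls 1 =ᶠ[nhds (H (0, 1))] L₀ 1 := hsZ Ls hLslift hLs0'
    filter_upwards [S.transport hH hHcl s hLslift] with s' hs'
    obtain ⟨L', hL'lift, hL'0, hL'1⟩ := hs'
    rw [hfix0 s] at hL'0
    rw [hfix1 s] at hL'1
    intro L'' hL''lift hL''0
    have hcomp : L'' 0 =ᶠ[nhds (H (s', 0))] L' 0 := by
      rw [hfix0 s']
      exact hL''0.trans ((hL'0.trans hLs0').symm)
    have huniq := _root_.SheetSystem.IsLift.germ_eq S (hccur s') hL''lift hL'lift hcomp 1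
    rw [hfix1 s'] at huniq
    exact huniq.trans (hL'1.trans hLs1)
  have hZo : IsOpen Z := isOpen_iff_mem_nhds.2 (fun s hs => hopen s hs)
  have hZc : IsClosed Z := by
    rw [← closure_subset_iff_isClosed]
    intro s hscl
    obtain ⟨Ls, hLslift, hLs0⟩ := hlift s
    have hLs0' : Ls 0 =ᶠ[nhds (H (0, 0))] h₀ := by rw [hLs0]
    obtain ⟨s', hs'Z, hs'T⟩ :=
      ((mem_closure_iff_frequently.1 hscl).and_eventually (S.transport hH hHcl s hLslift)).exists
    obtain ⟨L', hL'lift, hL'0, hL'1⟩ := hs'T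
    rw [hfix0 s] at hL'0
    rw [hfix1 s] at hL'1
    have hL'0' : L' 0 =ᶠ[nhds (H (0, 0))] h₀ := hL'0.trans hLs0'
    have hLs1 : Ls 1 =ᶠ[nhds (H (0, 1))] L₀ 1 := hL'1.symm.trans (hs'Z L' hL'lift hL'0')
    intro L'' hL''lift hL''0
    have hcomp : L'' 0 =ᶠ[nhds (H (s, 0))] Ls 0 := by
      rw [hfix0 s]
      exact hL''0.trans hLs0'.symm
    have huniq := _root_.SheetSystem.IsLift.germ_eq S (hccur s) hL''lift hLslift hcomp 1
    rw [hfix1 s] at huniq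
    exact huniq.trans hLs1
  have hZ0 : (0 : ℝ) ∈ Z := by
    intro L hLlift hL0
    have hcomp : L 0 =ᶠ[nhds (H (0, 0))] L₀ 0 := hL0.trans hL₀0.symm
    exact _root_.SheetSystem.IsLift.germ_eq S (hccur 0) hLlift hL₀ hcomp 1
  have hZuniv : Z = univ := IsClopen.eq_univ ⟨hZc, hZo⟩ ⟨0, hZ0⟩
  have h1Z : (1 : ℝ) ∈ Z := hZuniv ▸ mem_univ 1
  have := h1Z L₁ hL₁ hL₁0
  exact this

end SheetSystem
end AbstractContinuation

/-- A space charted on a locally path-connected model is locally path-connected. -/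
theorem ChartedSpace.locPathConnectedSpace' (H : Type*) [TopologicalSpace H]
    (M : Type*) [TopologicalSpace M] [ChartedSpace H M] [LocallyPathConnectedSpace H] :
    LocallyPathConnectedSpace M := by
  let e : M → OpenPartialHomeomorph M H := chartAt H
  refine LocPathConnectedSpace.of_bases
    (p := fun x s => (s ∈ nhds (e x x) ∧ IsPathConnected s) ∧ s ⊆ (e x).target)
    (s := fun x s => (e x).symm '' s) ?_ ?_
  · intro x
    rw [← (e x).symm_map_nhds_eq (mem_chart_source H x)]
    exact ((path_connected_basis (e x x)).restrict_subset
      ((e x).open_target.mem_nhds (mem_chart_target H x))).map _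
  · rintro x s ⟨⟨-, hs⟩, hsub⟩
    exact hs.image' ((e x).continuousOn_symm.mono hsub)

section Concrete

variable {m : ℕ} {M : Type*} [TopologicalSpace M] [ChartedSpace (Fin m → ℂ) M]
  [IsManifold 𝓘(ℂ, Fin m → ℂ) (⊤ : ℕ∞) M]

/-- Rigidity of affine representations: if two "affine ∘ chart" functions agree near a
point, they agree on the connected component of the intersection of their domains. -/
theorem affine_rigid {U : Set M} {φ : M → Fin m → ℂ}
    (hUo : IsOpen U)
    (hφ : MDifferentiableOn 𝓘(ℂ, Fin m → ℂ) 𝓘(ℂ, Fin m → ℂ) φ U)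
    (hdense : ∀ x ∈ U, x ∈ closure {y ∈ U |
      Function.Bijective (mfderiv 𝓘(ℂ, Fin m → ℂ) 𝓘(ℂ, Fin m → ℂ) φ y)})
    (C₁ C₂ : (Fin m → ℂ) →L[ℂ] (Fin m → ℂ)) (k₁ k₂ : Fin m → ℂ)
    {D : Set M} (hDo : IsOpen D) (hDU : D ⊆ U) {x : M} (hxD : x ∈ D)
    (he : (fun z => C₁ (φ z) + k₁) =ᶠ[nhds x] (fun z => C₂ (φ z) + k₂)) :
    ∀ z ∈ D, C₁ (φ z) + k₁ = C₂ (φ z) + k₂ := by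
  -- find a point where both agree near it and the derivative is surjective
  obtain ⟨N₁, hN₁sub, hN₁o, hxN₁⟩ := mem_nhds_iff.1 he
  have hxU : x ∈ U := hDU hxD
  obtain ⟨y, hyN, hyU, hybij⟩ :
      ∃ y, y ∈ (N₁ ∩ D) ∧ y ∈ U ∧
        Function.Bijective (mfderiv 𝓘(ℂ, Fin m → ℂ) 𝓘(ℂ, Fin m → ℂ) φ y) := by
    have := mem_closure_iff.1 (hdense x hxU) (N₁ ∩ D) (hN₁o.inter hDo) ⟨hxN₁, hxD⟩
    obtain ⟨y, hy1, hy2, hy3⟩ := this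
    exact ⟨y, hy1, hy2, hy3⟩
  -- the two affine functions of φ agree near y
  have hloc : (fun z => C₁ (φ z) + k₁) =ᶠ[nhds y] (fun z => C₂ (φ z) + k₂) :=
    eventuallyEq_of_mem (hN₁o.mem_nhds hyN.1) (fun z hz => hN₁sub hz)
  have hφy : MDifferentiableAt 𝓘(ℂ, Fin m → ℂ) 𝓘(ℂ, Fin m → ℂ) φ y :=
    (hφ y hyU).mdifferentiableAt (hUo.mem_nhds hyU)
  -- compute the differentials
  have hmd : ∀ (C : (Fin m → ℂ) →L[ℂ] (Fin m → ℂ)) (k : Fin m → ℂ),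
      mfderiv 𝓘(ℂ, Fin m → ℂ) 𝓘(ℂ, Fin m → ℂ) (fun z => C (φ z) + k) y
        = (C : (Fin m → ℂ) →L[ℂ] (Fin m → ℂ)).comp
            (mfderiv 𝓘(ℂ, Fin m → ℂ) 𝓘(ℂ, Fin m → ℂ) φ y) := by
    intro C k
    have hg : MDifferentiableAt 𝓘(ℂ, Fin m → ℂ) 𝓘(ℂ, Fin m → ℂ)
        (fun v : Fin m → ℂ => C v + k) (φ y) :=
      ((C.differentiable.differentiableAt).add_const k).mdifferentiableAt
    have hcomp := mfderiv_comp (I' := 𝓘(ℂ, Fin m → ℂ)) y hg hφy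
    have hgder : mfderiv 𝓘(ℂ, Fin m → ℂ) 𝓘(ℂ, Fin m → ℂ)
        (fun v : Fin m → ℂ => C v + k) (φ y) = C := by
      rw [mfderiv_eq_fderiv]
      exact (C.hasFDerivAt.add_const k).fderiv
    rw [hgder] at hcomp
    exact hcomp
  have hder : (C₁ : (Fin m → ℂ) →L[ℂ] (Fin m → ℂ)).comp
        (mfderiv 𝓘(ℂ, Fin m → ℂ) 𝓘(ℂ, Fin m → ℂ) φ y)
      = (C₂ : (Fin m → ℂ) →L[ℂ] (Fin m → ℂ)).comp
        (mfderiv 𝓘(ℂ, Fin m → ℂ) 𝓘(ℂ, Fin m → ℂ) φ y) := by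
    rw [← hmd C₁ k₁, ← hmd C₂ k₂]
    exact hloc.mfderiv_eq
  -- linear parts agree
  have hlin : ∀ v, C₁ v = C₂ v := by
    intro v
    obtain ⟨w, hw⟩ := hybij.2 v
    have h2 : C₁ ((mfderiv 𝓘(ℂ, Fin m → ℂ) 𝓘(ℂ, Fin m → ℂ) φ y) w)
        = C₂ ((mfderiv 𝓘(ℂ, Fin m → ℂ) 𝓘(ℂ, Fin m → ℂ) φ y) w) := by
      exact congrArg (fun (T : (Fin m → ℂ) →L[ℂ] (Fin m → ℂ)) => T w) hder
    rw [hw] at h2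
    exact h2
  -- constants agree
  have hval : C₁ (φ y) + k₁ = C₂ (φ y) + k₂ := hN₁sub hyN.1
  have hk : k₁ = k₂ := by
    have := hlin (φ y)
    rw [this] at hval
    exact add_left_cancel hval
  intro z _
  rw [hlin (φ z), hk]


/-- The sheet system of local affine representatives of a branched flat affine atlas. -/
theorem mk_sheetSystem [LocallyConnectedSpace M] {ι : Type} (U : ι → Set M)
    (φ : ι → M → (Fin m → ℂ))
    (hUo : ∀ i, IsOpen (U i)) (hUcov : (⋃ i, U i) = univ)
    (hφ : ∀ i, MDifferentiableOn 𝓘(ℂ, Fin m → ℂ) 𝓘(ℂ, Fin m → ℂ) (φ i) (U i))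
    (hdense : ∀ i, ∀ x ∈ U i, x ∈ closure {y ∈ U i |
      Function.Bijective (mfderiv 𝓘(ℂ, Fin m → ℂ) 𝓘(ℂ, Fin m → ℂ) (φ i) y)})
    (htrans : ∀ i j, ∀ x ∈ U i ∩ U j,
      ∃ (A : (Fin m → ℂ) ≃ₗ[ℂ] (Fin m → ℂ)) (b : Fin m → ℂ),
        ∀ y ∈ connectedComponentIn (U i ∩ U j) x, φ i y = A (φ j y) + b) :
    ∃ S : SheetSystem M (Fin m → ℂ), ∀ V h, S.Sheet V h ↔
      (IsOpen V ∧ ∃ (i : ι) (A : (Fin m → ℂ) ≃ₗ[ℂ] (Fin m → ℂ)) (b : Fin m → ℂ),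
        V ⊆ U i ∧ h = fun z => A (φ i z) + b) := by
  refine ⟨⟨fun V h => IsOpen V ∧ ∃ (i : ι) (A : (Fin m → ℂ) ≃ₗ[ℂ] (Fin m → ℂ))
      (b : Fin m → ℂ), V ⊆ U i ∧ h = fun z => A (φ i z) + b,
    fun hV => hV.1, ?_, ?_, ?_⟩, fun V h => Iff.rfl⟩
  · -- cover
    intro x
    have hx : x ∈ ⋃ i, U i := hUcov ▸ mem_univ x
    obtain ⟨i, hxi⟩ := mem_iUnion.1 hx
    exact ⟨U i, fun z => (LinearEquiv.refl ℂ (Fin m → ℂ)) (φ i z) + 0,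
      ⟨hUo i, i, LinearEquiv.refl ℂ _, 0, subset_rfl, rfl⟩, hxi⟩
  · -- rigid
    rintro V h V' h' x ⟨hVo, i, A, b, hVU, rfl⟩ ⟨hV'o, j, A', b', hV'U, rfl⟩ hxV hxV' he
    obtain ⟨B, cc, hB⟩ := htrans i j x ⟨hVU hxV, hV'U hxV'⟩
    have hDo : IsOpen (connectedComponentIn (V ∩ V') x) :=
      (hVo.inter hV'o).connectedComponentIn
    have hDmem : x ∈ connectedComponentIn (V ∩ V') x :=
      mem_connectedComponentIn ⟨hxV, hxV'⟩
    have hDsub : connectedComponentIn (V ∩ V') x ⊆ connectedComponentIn (U i ∩ U j) x :=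
      isPreconnected_connectedComponentIn.subset_connectedComponentIn hDmem
        ((connectedComponentIn_subset _ _).trans (inter_subset_inter hVU hV'U))
    have hDUj : connectedComponentIn (V ∩ V') x ⊆ U j :=
      (connectedComponentIn_subset _ _).trans
        ((inter_subset_inter hVU hV'U).trans inter_subset_right)
    set C₁ : (Fin m → ℂ) →L[ℂ] (Fin m → ℂ) :=
      LinearMap.toContinuousLinearMap ((A.toLinearMap).comp (B.toLinearMap)) with hC₁
    set C₂ : (Fin m → ℂ) →L[ℂ] (Fin m → ℂ) :=
      LinearMap.toContinuousLinearMap (A'.toLinearMap) with hC₂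
    have hC₁app : ∀ v, C₁ v = A (B v) := by
      intro v; simp [hC₁]
    have hC₂app : ∀ v, C₂ v = A' v := by
      intro v; simp [hC₂]
    have hrepr1 : ∀ z ∈ connectedComponentIn (V ∩ V') x,
        A (φ i z) + b = C₁ (φ j z) + (A cc + b) := by
      intro z hz
      rw [hB z (hDsub hz), map_add, hC₁app, add_assoc]
    have he' : (fun z => C₁ (φ j z) + (A cc + b)) =ᶠ[nhds x]
        (fun z => C₂ (φ j z) + b') := by
      have h1 : (fun z => C₁ (φ j z) + (A cc + b)) =ᶠ[nhds x]
          (fun z => A (φ i z) + b) :=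
        eventuallyEq_of_mem (hDo.mem_nhds hDmem) (fun z hz => (hrepr1 z hz).symm)
      have h2 : (fun z => A' (φ j z) + b') =ᶠ[nhds x] fun z => C₂ (φ j z) + b' :=
        Eventually.of_forall (fun z => by simp only [hC₂app])
      exact h1.trans (he.trans h2)
    have hmain := affine_rigid (hUo j) (hφ j) (hdense j) C₁ C₂ (A cc + b) b'
      hDo hDUj hDmem he'
    intro z hz
    calc A (φ i z) + b = C₁ (φ j z) + (A cc + b) := hrepr1 z hz
    _ = C₂ (φ j z) + b' := hmain z hz
    _ = A' (φ j z) + b' := by rw [hC₂app]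
  · -- move
    rintro V h V' h' y ⟨hVo, i, A, b, hVU, rfl⟩ ⟨hV'o, j, A', b', hV'U, rfl⟩ hyV hyV'
    obtain ⟨B, cc, hB⟩ := htrans j i y ⟨hV'U hyV', hVU hyV⟩
    refine ⟨fun z => (B.trans A') (φ i z) + (A' cc + b'),
      ⟨hVo, i, B.trans A', A' cc + b', hVU, rfl⟩, ?_⟩
    have hDo : IsOpen (connectedComponentIn (U j ∩ U i) y) :=
      ((hUo j).inter (hUo i)).connectedComponentIn
    have hymem : y ∈ connectedComponentIn (U j ∩ U i) y :=
      mem_connectedComponentIn ⟨hV'U hyV', hVU hyV⟩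
    refine eventuallyEq_of_mem (hDo.mem_nhds hymem) (fun z hz => ?_)
    rw [LinearEquiv.trans_apply, hB z hz, map_add, add_assoc]

end Concrete

end DevelopingTheory

section Statement9

variable {m : ℕ} {M : Type*} [TopologicalSpace M] [ChartedSpace (Fin m → ℂ) M]
  [IsManifold 𝓘(ℂ, Fin m → ℂ) (⊤ : ℕ∞) M]

/-- A (positive-dimensional) simply connected compact complex manifold does not admit any
branched flat holomorphic affine structure. -/
theorem no_branched_flat_affine_structure_of_simply_connected
    [CompactSpace M] [SimplyConnectedSpace M] (hm : 0 < m) :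
    ¬ HasBranchedFlatAffineStructure m M := by
  rintro ⟨ι, U, φ, hUo, hUcov, hφ, hdense, htrans⟩
  haveI : LocallyConnectedSpace M := ChartedSpace.locallyConnectedSpace (Fin m → ℂ) M
  haveI : LocallyPathConnectedSpace M := ChartedSpace.locPathConnectedSpace' (Fin m → ℂ) M
  obtain ⟨S, hSiff⟩ := mk_sheetSystem U φ hUo hUcov hφ hdense htrans
  -- `projIcc` clamping facts
  have hproj : ∀ t : ℝ, Set.projIcc (0:ℝ) 1 zero_le_one (max 0 (min 1 t))
      = Set.projIcc (0:ℝ) 1 zero_le_one t := by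
    intro t
    apply Subtype.ext
    rw [Set.coe_projIcc, Set.coe_projIcc]
    have h1 : max 0 (min 1 t) ≤ 1 := max_le zero_le_one (min_le_left _ _)
    rw [min_eq_right h1, max_eq_right (le_max_left _ _)]
  have hproj0 : Set.projIcc (0:ℝ) 1 zero_le_one 0 = 0 := by
    apply Subtype.ext
    rw [Set.coe_projIcc]
    norm_num
  have hproj1 : Set.projIcc (0:ℝ) 1 zero_le_one 1 = 1 := by
    apply Subtype.ext
    rw [Set.coe_projIcc]
    norm_num
  -- the real-parameter curve of a path
  let pc : ∀ {a b : M}, Path a b → ℝ → M :=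
    fun {a b} P t => P (Set.projIcc (0:ℝ) 1 zero_le_one t)
  have hpc_cont : ∀ {a b : M} (P : Path a b), Continuous (pc P) :=
    fun P => P.continuous.comp continuous_projIcc
  have hpc_clamp : ∀ {a b : M} (P : Path a b) (t : ℝ),
      pc P (max 0 (min 1 t)) = pc P t := fun P t => congrArg P (hproj t)
  have hpc0 : ∀ {a b : M} (P : Path a b), pc P 0 = a := by
    intro a b P
    show P _ = a
    rw [hproj0]
    exact P.source
  have hpc1 : ∀ {a b : M} (P : Path a b), pc P 1 = b := by
    intro a b P
    show P _ = b
    rw [hproj1]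
    exact P.target
  -- base point and base sheet
  have hne : Nonempty M := inferInstance
  set x₀ : M := Classical.arbitrary M with hx₀def
  obtain ⟨V₀, h₀, hS₀, hx₀V₀⟩ := S.cover x₀
  -- chosen paths and chosen lifts along them
  let pth : ∀ x : M, Path x₀ x := fun x => (PathConnectedSpace.joined x₀ x).somePath
  have hlift : ∀ x : M, ∃ L, S.IsLift (pc (pth x)) L ∧ L 0 = h₀ := fun x =>
    S.exists_lift (hpc_cont _) (hpc_clamp _) hS₀ (by rw [hpc0]; exact hx₀V₀)
  choose Lx hLxlift hLx0 using hlift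
  set f : M → (Fin m → ℂ) := fun x => Lx x 1 x with hfdef
  -- the developing map `f` is locally a sheet
  have key : ∀ x : M, ∃ V h, S.Sheet V h ∧ ∃ W, IsOpen W ∧ x ∈ W ∧ W ⊆ V ∧
      ∀ y ∈ W, f y = h y := by
    intro x
    obtain ⟨V, h, hSh, hE⟩ := hLxlift x 1
    have hc1 : pc (pth x) 1 = x := hpc1 _
    have hxV : x ∈ V := by have h1 := hE.self_of_nhds.1; rwa [hc1] at h1
    have hL1h : Lx x 1 =ᶠ[nhds x] h := by have h1 := hE.self_of_nhds.2; rwa [hc1] at h1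
    refine ⟨V, h, hSh, pathComponentIn V x, (S.isOpen' hSh).pathComponentIn x,
      mem_pathComponentIn_self hxV, pathComponentIn_subset, ?_⟩
    intro y hy
    obtain ⟨σ, hσmem⟩ := (isPathConnected_pathComponentIn hxV).joinedIn x
        (mem_pathComponentIn_self hxV) y hy
    have hσV : ∀ t, σ t ∈ V := fun t => pathComponentIn_subset (hσmem t)
    set PT : Path x₀ y := (pth x).trans σ with hPT
    -- the two halves of the concatenated curve
    have hA : ∀ t : ℝ, t ≤ 1/2 → pc PT t = pc (pth x) (2*t) := by
      intro t ht
      rcases le_or_gt t 0 with h0 | h0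
      · have h2 : Set.projIcc (0:ℝ) 1 zero_le_one t = 0 := by
          apply Subtype.ext
          rw [Set.coe_projIcc]
          rw [min_eq_right (h0.trans zero_le_one), max_eq_left h0]
          norm_num
        have h3 : Set.projIcc (0:ℝ) 1 zero_le_one (2*t) = 0 := by
          apply Subtype.ext
          rw [Set.coe_projIcc]
          have h4 : 2*t ≤ 0 := by linarith
          rw [min_eq_right (h4.trans zero_le_one), max_eq_left h4]
          norm_num
        show PT _ = (pth x) _
        rw [h2, h3, PT.source, (pth x).source]
      · have hmem : t ∈ Icc (0:ℝ) 1 := ⟨h0.le, by linarith⟩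
        have hmem2 : 2*t ∈ Icc (0:ℝ) 1 := ⟨by linarith, by linarith⟩
        show PT _ = (pth x) _
        rw [Set.projIcc_of_mem _ hmem, Set.projIcc_of_mem _ hmem2, hPT,
          Path.trans_apply]
        simp only [dif_pos (show ((⟨t, hmem⟩ : unitInterval) : ℝ) ≤ 1/2 from ht)]
    have hB : ∀ t : ℝ, 1/2 < t → pc PT t = pc σ (2*t - 1) := by
      intro t h0
      rcases le_or_gt t 1 with h1 | h1
      · have hmem : t ∈ Icc (0:ℝ) 1 := ⟨by linarith, h1⟩
        have hmem2 : 2*t - 1 ∈ Icc (0:ℝ) 1 := ⟨by linarith, by linarith⟩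
        show PT _ = σ _
        rw [Set.projIcc_of_mem _ hmem, Set.projIcc_of_mem _ hmem2, hPT,
          Path.trans_apply]
        simp only [dif_neg (show ¬ ((⟨t, hmem⟩ : unitInterval) : ℝ) ≤ 1/2 from
          not_le.2 h0)]
      · have h2 : Set.projIcc (0:ℝ) 1 zero_le_one t = 1 :=
          Set.projIcc_of_right_le _ h1.le
        have h3 : Set.projIcc (0:ℝ) 1 zero_le_one (2*t - 1) = 1 :=
          Set.projIcc_of_right_le _ (by linarith)
        show PT _ = σ _
        rw [h2, h3, PT.target, σ.target]
    -- lift along the concatenated path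
    set Λ : ℝ → M → (Fin m → ℂ) := fun t => if t ≤ (1:ℝ)/2 then Lx x (2*t) else h
      with hΛdef
    have hcont2 : Continuous fun u : ℝ => 2*u := continuous_const.mul continuous_id
    have hΛlift : S.IsLift (pc PT) Λ := by
      intro t
      rcases lt_trichotomy t (1/2 : ℝ) with ht | ht | ht
      · obtain ⟨V', h', hS', hE'⟩ := hLxlift x (2*t)
        refine ⟨V', h', hS', ?_⟩
        filter_upwards [hcont2.continuousAt.preimage_mem_nhds hE',
          eventually_lt_nhds ht] with u hu hu2
        refine ⟨?_, ?_⟩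
        · rw [hA u hu2.le]
          exact hu.1
        · simp only [hΛdef, if_pos hu2.le]
          rw [hA u hu2.le]
          exact hu.2
      · refine ⟨V, h, hSh, ?_⟩
        have h1 : (2 : ℝ) * t = 1 := by rw [ht]; norm_num
        have hE1 : ∀ᶠ w in nhds ((2:ℝ)*t), pc (pth x) w ∈ V ∧
            Lx x w =ᶠ[nhds (pc (pth x) w)] h := by rw [h1]; exact hE
        filter_upwards [hcont2.continuousAt.preimage_mem_nhds hE1] with u hu
        rcases le_or_gt u (1/2 : ℝ) with hu2 | hu2
        · refine ⟨?_, ?_⟩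
          · rw [hA u hu2]
            exact hu.1
          · simp only [hΛdef, if_pos hu2]
            rw [hA u hu2]
            exact hu.2
        · refine ⟨?_, ?_⟩
          · rw [hB u hu2]
            exact hσV _
          · simp only [hΛdef, if_neg (not_le.2 hu2)]
            exact Filter.EventuallyEq.rfl
      · refine ⟨V, h, hSh, ?_⟩
        filter_upwards [eventually_gt_nhds ht] with u hu
        refine ⟨?_, ?_⟩
        · rw [hB u hu]
          exact hσV _
        · simp only [hΛdef, if_neg (not_le.2 hu)]
          exact Filter.EventuallyEq.rfl
    have hΛ0 : Λ 0 = h₀ := by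
      simp only [hΛdef, if_pos (by norm_num : (0:ℝ) ≤ 1/2), mul_zero]
      exact hLx0 x
    -- the homotopy between the concatenated path and the chosen path to `y`
    set Q : Path x₀ y := pth y with hQ
    set Γ : Path.Homotopy PT Q := (SimplyConnectedSpace.paths_homotopic PT Q).some
      with hΓ
    set Hm : ℝ × ℝ → M := fun p => Γ (Set.projIcc (0:ℝ) 1 zero_le_one p.1,
      Set.projIcc (0:ℝ) 1 zero_le_one p.2) with hHm
    have hHmc : Continuous Hm := Γ.continuous.comp
      ((continuous_projIcc.comp continuous_fst).prodMk
        (continuous_projIcc.comp continuous_snd))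
    have hHmcl : ∀ s t, Hm (s, max 0 (min 1 t)) = Hm (s, t) := by
      intro s t
      simp only [hHm]
      rw [hproj t]
    have hHm0 : ∀ t, Hm (0, t) = pc PT t := by
      intro t
      simp only [hHm]
      rw [hproj0]
      exact Γ.apply_zero _
    have hHm1 : ∀ t, Hm (1, t) = pc Q t := by
      intro t
      simp only [hHm]
      rw [hproj1]
      exact Γ.apply_one _
    have hfix0 : ∀ s, Hm (s, 0) = Hm (0, 0) := by
      intro s
      simp only [hHm]
      rw [hproj0, Γ.source, Γ.source]
    have hfix1 : ∀ s, Hm (s, 1) = Hm (0, 1) := by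
      intro s
      simp only [hHm]
      rw [hproj1, Γ.target, Γ.target]
    have h00 : Hm (0, 0) ∈ V₀ := by
      rw [hHm0 0, hpc0]
      exact hx₀V₀
    have hΛlift' : S.IsLift (fun t => Hm (0, t)) Λ := by
      have h1 : (fun t => Hm (0, t)) = pc PT := funext hHm0
      rw [h1]
      exact hΛlift
    have hQlift' : S.IsLift (fun t => Hm (1, t)) (Lx y) := by
      have h1 : (fun t => Hm (1, t)) = pc Q := funext hHm1
      rw [h1]
      exact hLxlift y
    have hmono := S.monodromy hHmc hHmcl hfix0 hfix1 hS₀ h00 hΛlift'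
      (by rw [hΛ0]) hQlift' (by rw [hLx0 y])
    have hHm01 : Hm (0, 1) = y := by
      rw [hHm0 1]
      exact hpc1 PT
    rw [hHm01] at hmono
    have hΛ1 : Λ 1 = h := by
      simp only [hΛdef, if_neg (by norm_num : ¬ ((1:ℝ) ≤ 1/2))]
    rw [hΛ1] at hmono
    exact hmono.eq_of_nhds
  -- `f` is holomorphic
  have hmdiff : MDifferentiable 𝓘(ℂ, Fin m → ℂ) 𝓘(ℂ, Fin m → ℂ) f := by
    intro x
    obtain ⟨V, h, hSh, W, hWo, hxW, hWV, hEq⟩ := key x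
    obtain ⟨hVo, i, A, b, hVU, hh⟩ := (hSiff V h).1 hSh
    have hxU : x ∈ U i := hVU (hWV hxW)
    have hφx : MDifferentiableAt 𝓘(ℂ, Fin m → ℂ) 𝓘(ℂ, Fin m → ℂ) (φ i) x :=
      (hφ i x hxU).mdifferentiableAt ((hUo i).mem_nhds hxU)
    have hhd : MDifferentiableAt 𝓘(ℂ, Fin m → ℂ) 𝓘(ℂ, Fin m → ℂ) h x := by
      rw [hh]
      have hg : MDifferentiableAt 𝓘(ℂ, Fin m → ℂ) 𝓘(ℂ, Fin m → ℂ)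
          (fun v : Fin m → ℂ => (LinearMap.toContinuousLinearMap A.toLinearMap) v + b)
          (φ i x) :=
        (((LinearMap.toContinuousLinearMap
          A.toLinearMap).differentiable.differentiableAt).add_const b).mdifferentiableAt
      have hcomp := hg.comp x hφx
      have h1 : ((fun v : Fin m → ℂ =>
          (LinearMap.toContinuousLinearMap A.toLinearMap) v + b) ∘ (φ i))
          = fun z => A (φ i z) + b := by
        funext z
        simp [Function.comp]
      rwa [h1] at hcomp
    refine hhd.congr_of_eventuallyEq ?_
    exact Filter.eventuallyEq_of_mem (hWo.mem_nhds hxW) (fun z hz => hEq z hz)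
  -- `f` is constant
  haveI : PreconnectedSpace M := inferInstance
  obtain ⟨k, hk⟩ := hmdiff.exists_eq_const_of_compactSpace
  -- contradiction with the density of immersion points
  obtain ⟨V, h, hSh, W, hWo, hxW, hWV, hEq⟩ := key x₀
  obtain ⟨hVo, i, A, b, hVU, hh⟩ := (hSiff V h).1 hSh
  have hxU : x₀ ∈ U i := hVU (hWV hxW)
  obtain ⟨y, hyW, hyU, hybij⟩ :
      ∃ y, y ∈ W ∧ y ∈ U i ∧ Function.Bijective
        (mfderiv 𝓘(ℂ, Fin m → ℂ) 𝓘(ℂ, Fin m → ℂ) (φ i) y) := by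
    obtain ⟨y, hy1, hy2, hy3⟩ := mem_closure_iff.1 (hdense i x₀ hxU) W hWo hxW
    exact ⟨y, hy1, hy2, hy3⟩
  -- `φ i` is constant near `y`
  have hconst : ∀ z ∈ W, φ i z = A.symm (k - b) := by
    intro z hz
    have h1 : A (φ i z) + b = k := by
      have h2 := hEq z hz
      have h3 : h z = A (φ i z) + b := by rw [hh]
      rw [← h3, ← h2, hk]
      rfl
    have h3 : A (φ i z) = k - b := by rw [← h1]; ring
    have h4 := congrArg A.symm h3
    rwa [A.symm_apply_apply] at h4
  have hgerm : φ i =ᶠ[nhds y] fun _ => A.symm (k - b) :=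
    Filter.eventuallyEq_of_mem (hWo.mem_nhds hyW) (fun z hz => hconst z hz)
  have hd0 : mfderiv 𝓘(ℂ, Fin m → ℂ) 𝓘(ℂ, Fin m → ℂ) (φ i) y
      = mfderiv 𝓘(ℂ, Fin m → ℂ) 𝓘(ℂ, Fin m → ℂ) (fun _ => A.symm (k - b)) y :=
    hgerm.mfderiv_eq
  rw [hd0, mfderiv_const] at hybij
  -- the zero map is not bijective since `m > 0`
  have hv : (fun _ : Fin m => (1:ℂ)) ≠ (0 : Fin m → ℂ) := by
    intro hcon
    have := congrFun hcon ⟨0, hm⟩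
    simpa using this
  apply hv
  apply hybij.injective
  rfl

end Statement9
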